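/- arXiv:2601.04003 — 3 statements merged into one kernel-verified Lean document; each statement's English description precedes it below -/
import Mathlib

section
/- Let n ≥ 1, let a, b ∈ ℝⁿ with aᵢ < bᵢ for every i, let f : ℝⁿ → ℝ be continuous, and let μ > 0. Then the barrier function B(x; μ) := f(x) − μ ∑_{i=1}^{n} (log(xᵢ − aᵢ) + log(bᵢ − xᵢ)) attains its global minimum over the open box {x ∈ ℝⁿ : aᵢ < xᵢ < bᵢ}; i.e., there exists x* with a < x* < b componentwise such that B(x*; μ) ≤ B(x; μ) for all x in the open box. -/
open Real Finset


/-- For a continuous objective `f` and `μ > 0`, the logarithmic barrier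
function `B(x;μ) = f(x) - μ ∑ i (log (xᵢ - aᵢ) + log (bᵢ - xᵢ))` attains its global
minimum over the open box `{x : aᵢ < xᵢ < bᵢ}`. -/
theorem barrier_function_attains_min_on_open_box
    (n : ℕ) (hn : 1 ≤ n) (a b : Fin n → ℝ) (hab : ∀ i, a i < b i)
    (f : (Fin n → ℝ) → ℝ) (hf : Continuous f) (μ : ℝ) (hμ : 0 < μ) :
    ∃ xstar : Fin n → ℝ, (∀ i, a i < xstar i ∧ xstar i < b i) ∧
      ∀ x : Fin n → ℝ, (∀ i, a i < x i ∧ x i < b i) →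
        f xstar - μ * ∑ i, (Real.log (xstar i - a i) + Real.log (b i - xstar i)) ≤
          f x - μ * ∑ i, (Real.log (x i - a i) + Real.log (b i - x i)) := by
  haveI : Nonempty (Fin n) := ⟨⟨0, hn⟩⟩
  set B : (Fin n → ℝ) → ℝ :=
    fun x => f x - μ * ∑ i, (Real.log (x i - a i) + Real.log (b i - x i)) with hBdef
  set x0 : Fin n → ℝ := fun i => (a i + b i) / 2 with hx0def
  have hx0mem : ∀ i, a i < x0 i ∧ x0 i < b i := by
    intro i
    constructor <;> · simp only [hx0def]; linarith [hab i]
  obtain ⟨M, hM⟩ := (isCompact_Icc (a := a) (b := b)).exists_bound_of_continuousOn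
    hf.continuousOn
  set C : ℝ := max 0 (Finset.univ.sup' Finset.univ_nonempty
    fun i => Real.log (b i - a i)) with hCdef
  have hC0 : (0:ℝ) ≤ C := le_max_left _ _
  have hCb : ∀ i, Real.log (b i - a i) ≤ C := fun i =>
    le_max_of_le_right (Finset.le_sup' (f := fun i => Real.log (b i - a i)) (Finset.mem_univ i))
  -- each single log term on the open box is ≤ C
  have hlogC : ∀ x : Fin n → ℝ, (∀ i, a i < x i ∧ x i < b i) → ∀ i,
      Real.log (x i - a i) ≤ C ∧ Real.log (b i - x i) ≤ C := by
    intro x hx i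
    have h1 : (0:ℝ) < x i - a i := by linarith [(hx i).1]
    have h2 : (0:ℝ) < b i - x i := by linarith [(hx i).2]
    constructor
    · exact le_trans (Real.log_le_log h1 (by linarith [(hx i).2])) (hCb i)
    · exact le_trans (Real.log_le_log h2 (by linarith [(hx i).1])) (hCb i)
  set D : ℝ := (2 * (n:ℝ) + 1) * C with hDdef
  have hD0 : 0 ≤ D := by positivity
  set s0 : ℝ := Finset.univ.inf' Finset.univ_nonempty (fun i => (b i - a i) / 2)
    with hs0def
  have hs0 : 0 < s0 := by
    rw [hs0def]
    apply Finset.lt_inf'_iff .. |>.2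
    intro i _
    linarith [hab i]
  obtain ⟨t, htdef⟩ : ∃ t : ℝ, t = (-M - B x0) / μ - D := ⟨_, rfl⟩
  set δ : ℝ := min (Real.exp t / 2) s0 with hδdef
  have hδ0 : 0 < δ := lt_min (by positivity) hs0
  have hδs0 : δ ≤ s0 := min_le_right _ _
  have hδs : ∀ i, δ ≤ (b i - a i) / 2 := by
    intro i
    exact le_trans hδs0 (Finset.inf'_le _ (Finset.mem_univ i))
  have hlogδ : Real.log δ < t := by
    have h1 : δ < Real.exp t := lt_of_le_of_lt (min_le_left _ _)
      (by linarith [Real.exp_pos t])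
    calc Real.log δ < Real.log (Real.exp t) := Real.log_lt_log hδ0 h1
      _ = t := Real.log_exp t
  set K : Set (Fin n → ℝ) := Set.Icc (fun i => a i + δ) (fun i => b i - δ) with hKdef
  have hKsub : ∀ x ∈ K, ∀ i, a i < x i ∧ x i < b i := by
    intro x hx i
    obtain ⟨h1, h2⟩ := hx
    exact ⟨by have := h1 i; simp at this; linarith, by have := h2 i; simp at this; linarith⟩
  have hx0K : x0 ∈ K := by
    constructor <;> intro i <;> · simp only [hx0def]; linarith [hδs i]
  have hKcomp : IsCompact K := isCompact_Icc
  have hBcont : ContinuousOn B K := by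
    apply ContinuousOn.sub hf.continuousOn
    apply ContinuousOn.mul continuousOn_const
    apply continuousOn_finset_sum
    intro i _
    apply ContinuousOn.add
    · apply ContinuousOn.log ((continuous_apply i).continuousOn.sub continuousOn_const)
      intro x hx
      have := (hKsub x hx i).1
      intro h; linarith [sub_eq_zero.mp h]
    · apply ContinuousOn.log (continuousOn_const.sub (continuous_apply i).continuousOn)
      intro x hx
      have := (hKsub x hx i).2
      intro h; linarith [sub_eq_zero.mp h]
  obtain ⟨xstar, hxK, hmin⟩ := hKcomp.exists_isMinOn ⟨x0, hx0K⟩ hBcont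
  refine ⟨xstar, hKsub _ hxK, ?_⟩
  intro x hx
  show B xstar ≤ B x
  by_cases hxmem : x ∈ K
  · exact hmin hxmem
  · -- x is within δ of the boundary: B x > B x0 ≥ B xstar
    have hBx0 : B xstar ≤ B x0 := hmin hx0K
    -- find bad coordinate
    have : ∃ j, x j - a j < δ ∨ b j - x j < δ := by
      by_contra h
      push_neg at h
      exact hxmem ⟨fun i => show a i + δ ≤ x i by linarith [(h i).1],
        fun i => show x i ≤ b i - δ by linarith [(h i).2]⟩
    obtain ⟨j, hj⟩ := this
    have hpairle : ∀ i, Real.log (x i - a i) + Real.log (b i - x i) ≤ 2 * C := by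
      intro i
      obtain ⟨h1, h2⟩ := hlogC x hx i
      linarith
    have hpairj : Real.log (x j - a j) + Real.log (b j - x j) ≤ Real.log δ + C := by
      obtain ⟨h1, h2⟩ := hlogC x hx j
      rcases hj with h | h
      · have : Real.log (x j - a j) ≤ Real.log δ :=
          Real.log_le_log (by linarith [(hx j).1]) (by linarith)
        linarith
      · have : Real.log (b j - x j) ≤ Real.log δ :=
          Real.log_le_log (by linarith [(hx j).2]) (by linarith)
        linarith
    have hsum : ∑ i, (Real.log (x i - a i) + Real.log (b i - x i)) ≤ Real.log δ + D := by
      have hsplit := Finset.add_sum_erase Finset.univ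
        (fun i => Real.log (x i - a i) + Real.log (b i - x i)) (Finset.mem_univ j)
      have herase : ∑ i ∈ Finset.univ.erase j,
          (Real.log (x i - a i) + Real.log (b i - x i)) ≤ (n:ℝ) * (2 * C) := by
        calc ∑ i ∈ Finset.univ.erase j, (Real.log (x i - a i) + Real.log (b i - x i))
            ≤ ∑ _i ∈ Finset.univ.erase j, (2 * C) :=
              Finset.sum_le_sum fun i _ => hpairle i
          _ = ((Finset.univ.erase j).card : ℝ) * (2 * C) := by
              rw [Finset.sum_const, nsmul_eq_mul]
          _ ≤ (n:ℝ) * (2 * C) := by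
              apply mul_le_mul_of_nonneg_right _ (by positivity)
              exact_mod_cast le_trans (Finset.card_le_card (Finset.erase_subset _ _))
                (by simp)
      calc ∑ i, (Real.log (x i - a i) + Real.log (b i - x i))
          = (Real.log (x j - a j) + Real.log (b j - x j)) +
            ∑ i ∈ Finset.univ.erase j, (Real.log (x i - a i) + Real.log (b i - x i)) :=
            hsplit.symm
        _ ≤ (Real.log δ + C) + (n:ℝ) * (2 * C) := add_le_add hpairj herase
        _ = Real.log δ + D := by rw [hDdef]; ring
    have hfx : -M ≤ f x := by
      have hxmem' : x ∈ Set.Icc a b := ⟨fun i => (hx i).1.le, fun i => (hx i).2.le⟩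
      have := hM x hxmem'
      rw [Real.norm_eq_abs] at this
      linarith [abs_le.mp this |>.1]
    have hBx : -M - μ * (Real.log δ + D) ≤ B x := by
      simp only [hBdef]
      have := mul_le_mul_of_nonneg_left hsum hμ.le
      linarith
    have hBx0lt : B x0 < -M - μ * (Real.log δ + D) := by
      have h1 : Real.log δ + D < (-M - B x0) / μ := by rw [htdef] at hlogδ; linarith
      have h2 : μ * (Real.log δ + D) < -M - B x0 := by
        rw [mul_comm]; exact (lt_div_iff₀ hμ).mp h1
      linarith
    linarith
end

section
/- Let n ≥ 1, let a, b ∈ ℝⁿ with aᵢ < bᵢ for every i, and let f : ℝⁿ → ℝ be continuous. Let (μ_k) be a sequence of positive reals with μ_k → 0, and for each k let x_k be a global minimizer over the open box {x : aᵢ < xᵢ < bᵢ} of the barrier function B(x; μ_k) := f(x) − μ_k ∑_{i=1}^{n} (log(xᵢ − aᵢ) + log(bᵢ − xᵢ)). If x_k converges to some x̄, then x̄ ∈ [a,b] and f(x̄) = min_{x ∈ [a,b]} f(x); i.e., x̄ is a global minimizer of f over the closed box. -/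
/-- If `μ_k → 0`, `x_k` is a global minimizer of the barrier function
`B(·;μ_k)` over the open box, and `x_k → x̄`, then `x̄` lies in the closed box `[a,b]`
and is a global minimizer of `f` over `[a,b]`. -/
theorem barrier_minimizers_converge_to_constrained_minimizer
    (n : ℕ) (hn : 1 ≤ n) (a b : Fin n → ℝ) (hab : ∀ i, a i < b i)
    (f : (Fin n → ℝ) → ℝ) (hf : Continuous f)
    (μ : ℕ → ℝ) (hμpos : ∀ k, 0 < μ k)
    (hμ : Filter.Tendsto μ Filter.atTop (nhds 0))
    (x : ℕ → Fin n → ℝ)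
    (hxfeas : ∀ k, ∀ i, a i < x k i ∧ x k i < b i)
    (hxmin : ∀ k, ∀ y : Fin n → ℝ, (∀ i, a i < y i ∧ y i < b i) →
      f (x k) - μ k * ∑ i, (Real.log (x k i - a i) + Real.log (b i - x k i)) ≤
        f y - μ k * ∑ i, (Real.log (y i - a i) + Real.log (b i - y i)))
    (xbar : Fin n → ℝ)
    (hlim : Filter.Tendsto x Filter.atTop (nhds xbar)) :
    (∀ i, a i ≤ xbar i ∧ xbar i ≤ b i) ∧
    (∀ y : Fin n → ℝ, (∀ i, a i ≤ y i ∧ y i ≤ b i) → f xbar ≤ f y) := by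
  have hlimi : ∀ i, Filter.Tendsto (fun k => x k i) Filter.atTop (nhds (xbar i)) := by
    intro i
    exact ((continuous_apply i).tendsto xbar).comp hlim
  have hbox : ∀ i, a i ≤ xbar i ∧ xbar i ≤ b i := by
    intro i
    constructor
    · exact le_of_tendsto_of_tendsto' tendsto_const_nhds (hlimi i)
        (fun k => (hxfeas k i).1.le)
    · exact le_of_tendsto_of_tendsto' (hlimi i) tendsto_const_nhds
        (fun k => (hxfeas k i).2.le)
  refine ⟨hbox, ?_⟩
  -- sum function and its upper bound
  set S : (Fin n → ℝ) → ℝ :=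
    fun z => ∑ i, (Real.log (z i - a i) + Real.log (b i - z i)) with hS
  set C : ℝ := ∑ i : Fin n, (Real.log (b i - a i) + Real.log (b i - a i)) with hC
  have hSbound : ∀ k, S (x k) ≤ C := by
    intro k
    apply Finset.sum_le_sum
    intro i _
    have h1 := (hxfeas k i).1
    have h2 := (hxfeas k i).2
    have l1 : Real.log (x k i - a i) ≤ Real.log (b i - a i) :=
      Real.log_le_log (by linarith) (by linarith)
    have l2 : Real.log (b i - x k i) ≤ Real.log (b i - a i) :=
      Real.log_le_log (by linarith) (by linarith)
    linarith
  -- the claim for points in the open box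
  have key : ∀ y : Fin n → ℝ, (∀ i, a i < y i ∧ y i < b i) → f xbar ≤ f y := by
    intro y hy
    have hineq : ∀ k, f (x k) ≤ f y + μ k * (C - S y) := by
      intro k
      have h := hxmin k y hy
      have hμk := (hμpos k).le
      have hm : μ k * S (x k) ≤ μ k * C :=
        mul_le_mul_of_nonneg_left (hSbound k) hμk
      simp only [hS] at h ⊢
      nlinarith [h, hm]
    have h1 : Filter.Tendsto (fun k => f (x k)) Filter.atTop (nhds (f xbar)) :=
      (hf.tendsto xbar).comp hlim
    have h2 : Filter.Tendsto (fun k => f y + μ k * (C - S y)) Filter.atTop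
        (nhds (f y + 0 * (C - S y))) :=
      Filter.Tendsto.const_add _ (hμ.mul_const _)
    rw [zero_mul, add_zero] at h2
    exact le_of_tendsto_of_tendsto' h1 h2 hineq
  -- extend to the closed box by approximation
  intro y hy
  set c : Fin n → ℝ := fun i => (a i + b i) / 2 with hc
  set z : ℕ → Fin n → ℝ :=
    fun m i => y i + (1 / (m + 1 : ℝ)) * (c i - y i) with hz
  have hzfeas : ∀ m, ∀ i, a i < z m i ∧ z m i < b i := by
    intro m i
    have ht0 : (0:ℝ) < 1 / (m + 1 : ℝ) := by positivity
    have ht1 : (1:ℝ) / (m + 1 : ℝ) ≤ 1 := by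
      rw [div_le_one (by positivity)]
      linarith [Nat.cast_nonneg (α := ℝ) m]
    have hyi1 := (hy i).1
    have hyi2 := (hy i).2
    have hci1 : a i < c i := by simp only [hc]; linarith [hab i]
    have hci2 : c i < b i := by simp only [hc]; linarith [hab i]
    constructor
    · simp only [hz]
      nlinarith
    · simp only [hz]
      nlinarith
  have hzlim : Filter.Tendsto z Filter.atTop (nhds y) := by
    rw [tendsto_pi_nhds]
    intro i
    have : Filter.Tendsto (fun m : ℕ => y i + (1 / (m + 1 : ℝ)) * (c i - y i))
        Filter.atTop (nhds (y i + 0 * (c i - y i))) :=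
      Filter.Tendsto.const_add _ (tendsto_one_div_add_atTop_nhds_zero_nat.mul_const _)
    rw [zero_mul, add_zero] at this
    exact this
  have hfz : Filter.Tendsto (fun m => f (z m)) Filter.atTop (nhds (f y)) :=
    (hf.tendsto y).comp hzlim
  exact ge_of_tendsto' hfz (fun m => key (z m) (hzfeas m))
end

section
/- Let n ≥ 1 and let H : ℝⁿ × ℝ → ℝⁿ be continuously differentiable. Assume: (i) H(x₀, 0) = 0 for some x₀ ∈ ℝⁿ; (ii) for every (x, t) ∈ ℝⁿ × [0,1] with H(x, t) = 0, the partial Jacobian H_x(x, t) ∈ ℝ^{n×n} is invertible; (iii) there is a compact set K ⊆ ℝⁿ such that every (x, t) ∈ ℝⁿ × [0,1] with H(x, t) = 0 satisfies x ∈ K. Then there exists a continuous map x : [0,1] → ℝⁿ, continuously differentiable on (0,1), with x(0) = x₀ and H(x(t), t) = 0 for all t ∈ [0,1]. In particular, x* := x(1) satisfies H(x*, 1) = 0, so the homotopy method starting from x₀ reaches a zero of F := H(·, 1). -/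
open Set Metric Topology Filter

private lemma homotopy_aux_equiv {n : ℕ}
    (H : (Fin n → ℝ) × ℝ → Fin n → ℝ)
    (p : (Fin n → ℝ) × ℝ)
    (hbij : Function.Bijective (fun v : Fin n → ℝ => fderiv ℝ H p (v, 0))) :
    ∃ e : ((Fin n → ℝ) × ℝ) ≃L[ℝ] ((Fin n → ℝ) × ℝ),
      (e : ((Fin n → ℝ) × ℝ) →L[ℝ] ((Fin n → ℝ) × ℝ)) =
        (fderiv ℝ H p).prod (ContinuousLinearMap.snd ℝ (Fin n → ℝ) ℝ) := by
  set D := fderiv ℝ H p with hD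
  set A : ((Fin n → ℝ) × ℝ) →L[ℝ] ((Fin n → ℝ) × ℝ) :=
    D.prod (ContinuousLinearMap.snd ℝ (Fin n → ℝ) ℝ) with hA
  have hAapp : ∀ q : (Fin n → ℝ) × ℝ, A q = (D q, q.2) := fun q => rfl
  have hAbij : Function.Bijective A := by
    constructor
    · intro a b hab
      have hab' : (D a, a.2) = (D b, b.2) := by rw [← hAapp, ← hAapp]; exact hab
      have h2 : a.2 = b.2 := (Prod.ext_iff.mp hab').2
      have h1 : D a = D b := (Prod.ext_iff.mp hab').1
      have hsub : D (a.1 - b.1, 0) = 0 := by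
        have h3 : D (a - b) = 0 := by rw [map_sub, h1, sub_self]
        have h4 : a - b = (a.1 - b.1, (0:ℝ)) := by
          rw [Prod.sub_def, h2, sub_self]
        rwa [h4] at h3
      have h5 : a.1 - b.1 = 0 := by
        have := hbij.1 (a₁ := a.1 - b.1) (a₂ := 0) (by show D (a.1 - b.1, 0) = D (0, 0); rw [show ((0 : Fin n → ℝ), (0:ℝ)) = (0 : (Fin n → ℝ) × ℝ) from rfl, map_zero]; simpa using hsub)
        simpa using this
      have h1' : a.1 = b.1 := sub_eq_zero.mp h5
      exact Prod.ext h1' h2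
    · rintro ⟨w, τ⟩
      obtain ⟨v, hv⟩ := hbij.2 (w - D (0, τ))
      refine ⟨(v, τ), ?_⟩
      rw [hAapp]
      have : D (v, τ) = D (v, 0) + D (0, τ) := by
        rw [← map_add]
        norm_num
      simp only [this, hv]
      simp [sub_add_cancel]
  refine ⟨(LinearEquiv.ofBijective (A : ((Fin n → ℝ) × ℝ) →ₗ[ℝ] ((Fin n → ℝ) × ℝ)) hAbij).toContinuousLinearEquiv, ?_⟩
  exact ContinuousLinearMap.ext fun q => rfl

private lemma homotopy_local {n : ℕ}
    (H : (Fin n → ℝ) × ℝ → Fin n → ℝ) (hH : ContDiff ℝ 1 H)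
    (hreg : ∀ x : Fin n → ℝ, ∀ t ∈ Set.Icc (0 : ℝ) 1, H (x, t) = 0 →
      Function.Bijective (fun v : Fin n → ℝ => fderiv ℝ H (x, t) (v, 0)))
    (z : Fin n → ℝ) (t : ℝ) (ht : t ∈ Set.Icc (0:ℝ) 1) (hz : H (z, t) = 0) :
    ∃ (U : Set (Fin n → ℝ)) (ε : ℝ) (φ : ℝ → Fin n → ℝ), IsOpen U ∧ z ∈ U ∧ 0 < ε ∧
      (∀ s ∈ ball t ε, H (φ s, s) = 0) ∧
      (∀ s ∈ ball t ε, ContinuousAt φ s) ∧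
      (∀ s ∈ ball t ε ∩ Icc (0:ℝ) 1, ContDiffAt ℝ 1 φ s) ∧
      (∀ s ∈ ball t ε, ∀ y ∈ U, H (y, s) = 0 → y = φ s) := by
  classical
  set f : (Fin n → ℝ) × ℝ → (Fin n → ℝ) × ℝ := fun q => (H q, q.2) with hfdef
  have hf : ContDiff ℝ 1 f := hH.prodMk contDiff_snd
  -- at every zero with time in [0,1], f has an invertible derivative
  have key : ∀ q : (Fin n → ℝ) × ℝ, q.2 ∈ Set.Icc (0:ℝ) 1 → H q = 0 →
      ∃ e : ((Fin n → ℝ) × ℝ) ≃L[ℝ] ((Fin n → ℝ) × ℝ),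
        HasFDerivAt f (e : ((Fin n → ℝ) × ℝ) →L[ℝ] ((Fin n → ℝ) × ℝ)) q := by
    intro q hq2 hq0
    have hbij := hreg q.1 q.2 hq2 (by rw [Prod.mk.eta]; exact hq0)
    rw [Prod.mk.eta] at hbij
    obtain ⟨e, he⟩ := homotopy_aux_equiv H q hbij
    refine ⟨e, ?_⟩
    rw [he]
    exact ((hH.differentiable one_ne_zero).differentiableAt.hasFDerivAt).prodMk
      ((ContinuousLinearMap.snd ℝ (Fin n → ℝ) ℝ).hasFDerivAt)
  set p : (Fin n → ℝ) × ℝ := (z, t) with hpdef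
  obtain ⟨e, he⟩ := key p ht hz
  set Φ : OpenPartialHomeomorph ((Fin n → ℝ) × ℝ) ((Fin n → ℝ) × ℝ) :=
    hf.contDiffAt.toOpenPartialHomeomorph f he one_ne_zero with hΦdef
  have hcoe : ⇑Φ = f := rfl
  have hsrc : p ∈ Φ.source := hf.contDiffAt.mem_toOpenPartialHomeomorph_source he one_ne_zero
  have htgt : ((0 : Fin n → ℝ), t) ∈ Φ.target := by
    have := hf.contDiffAt.image_mem_toOpenPartialHomeomorph_target (f := f) he one_ne_zero
    have hfp : f p = ((0 : Fin n → ℝ), t) := by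
      show (H p, p.2) = _; rw [hz]
    rwa [hfp] at this
  obtain ⟨r1, hr1, hball1⟩ := Metric.isOpen_iff.mp Φ.open_source p hsrc
  obtain ⟨r2, hr2, hball2⟩ := Metric.isOpen_iff.mp Φ.open_target _ htgt
  set ε := min r1 r2 with hεdef
  have hε : 0 < ε := lt_min hr1 hr2
  set φ : ℝ → Fin n → ℝ := fun s => (Φ.symm ((0 : Fin n → ℝ), s)).1 with hφdef
  have hmem : ∀ s ∈ ball t ε, ((0 : Fin n → ℝ), s) ∈ Φ.target := by
    intro s hs
    apply hball2
    rw [mem_ball, Prod.dist_eq]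
    simp only [dist_self]
    rw [max_eq_right dist_nonneg]
    exact lt_of_lt_of_le (mem_ball.mp hs) (min_le_right _ _)
  have hqeq : ∀ s ∈ ball t ε, Φ.symm ((0 : Fin n → ℝ), s) = (φ s, s) := by
    intro s hs
    have h1 : Φ (Φ.symm ((0 : Fin n → ℝ), s)) = ((0 : Fin n → ℝ), s) :=
      Φ.right_inv (hmem s hs)
    have h2 : (Φ.symm ((0 : Fin n → ℝ), s)).2 = s := congrArg Prod.snd h1
    exact Prod.ext rfl h2
  have hzero : ∀ s ∈ ball t ε, H (φ s, s) = 0 := by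
    intro s hs
    have h1 : Φ (Φ.symm ((0 : Fin n → ℝ), s)) = ((0 : Fin n → ℝ), s) :=
      Φ.right_inv (hmem s hs)
    have h3 : H (Φ.symm ((0 : Fin n → ℝ), s)) = 0 := congrArg Prod.fst h1
    rwa [hqeq s hs] at h3
  refine ⟨ball z r1, ε, φ, isOpen_ball, mem_ball_self hr1, hε, hzero, ?_, ?_, ?_⟩
  · intro s hs
    have hc : ContinuousAt Φ.symm ((0 : Fin n → ℝ), s) :=
      Φ.symm.continuousAt (by rw [OpenPartialHomeomorph.symm_source]; exact hmem s hs)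
    exact continuousAt_fst.comp
      (hc.comp ((continuous_const.prodMk continuous_id).continuousAt))
  · rintro s ⟨hs1, hs2⟩
    obtain ⟨e2, he2⟩ := key (φ s, s) hs2 (hzero s hs1)
    have hsymm : ContDiffAt ℝ 1 Φ.symm ((0 : Fin n → ℝ), s) := by
      apply Φ.contDiffAt_symm (hmem s hs1)
      · rw [hqeq s hs1]; exact he2
      · rw [hqeq s hs1]; exact hf.contDiffAt
    exact contDiffAt_fst.comp s (hsymm.comp s (contDiffAt_const.prodMk contDiffAt_id))
  · intro s hs y hy h0
    have hys : (y, s) ∈ Φ.source := by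
      apply hball1
      rw [mem_ball, hpdef, Prod.dist_eq]
      exact max_lt (mem_ball.mp hy) (lt_of_lt_of_le (mem_ball.mp hs) (min_le_left _ _))
    have h1 : Φ.symm (Φ (y, s)) = (y, s) := Φ.left_inv hys
    have h2 : Φ (y, s) = ((0 : Fin n → ℝ), s) := by
      show f (y, s) = _
      simp only [hfdef, h0]
    rw [h2, hqeq s hs] at h1
    exact (congrArg Prod.fst h1).symm

/-- Global continuation: if `H(x₀,0) = 0`, the partial Jacobian `H_x` is
invertible at every zero of `H(·,t)` for `t ∈ [0,1]`, and all zeros are confined to a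
compact set, then there is a zero curve `x : [0,1] → ℝⁿ`, continuous on `[0,1]` and
`C¹` on `(0,1)`, with `x(0) = x₀` and `H(x(t),t) = 0` on `[0,1]`; in particular
`x(1)` is a zero of the target problem `H(·,1)`. -/
theorem homotopy_zero_curve_reaches_target
    (n : ℕ) (hn : 1 ≤ n)
    (H : (Fin n → ℝ) × ℝ → Fin n → ℝ) (hH : ContDiff ℝ 1 H)
    (x₀ : Fin n → ℝ) (h0 : H (x₀, 0) = 0)
    (hreg : ∀ x : Fin n → ℝ, ∀ t ∈ Set.Icc (0 : ℝ) 1, H (x, t) = 0 →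
      Function.Bijective (fun v : Fin n → ℝ => fderiv ℝ H (x, t) (v, 0)))
    (K : Set (Fin n → ℝ)) (hK : IsCompact K)
    (hbdd : ∀ x : Fin n → ℝ, ∀ t ∈ Set.Icc (0 : ℝ) 1, H (x, t) = 0 → x ∈ K) :
    ∃ x : ℝ → Fin n → ℝ,
      ContinuousOn x (Set.Icc 0 1) ∧
      ContDiffOn ℝ 1 x (Set.Ioo 0 1) ∧
      x 0 = x₀ ∧
      (∀ t ∈ Set.Icc (0 : ℝ) 1, H (x t, t) = 0) := by
  classical
  -- uniform local data from compactness (Lebesgue number lemma)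
  obtain ⟨δ, hδ, keyU⟩ : ∃ δ > 0, ∀ z : Fin n → ℝ, ∀ t ∈ Set.Icc (0:ℝ) 1, H (z, t) = 0 →
      ∃ φ : ℝ → Fin n → ℝ,
        (∀ s ∈ ball t δ, H (φ s, s) = 0) ∧
        (∀ s ∈ ball t δ, ContinuousAt φ s) ∧
        (∀ s ∈ ball t δ ∩ Set.Icc (0:ℝ) 1, ContDiffAt ℝ 1 φ s) ∧
        (∀ s ∈ ball t δ, ∀ y, dist y z < δ → H (y, s) = 0 → y = φ s) := by
    set S : Set ((Fin n → ℝ) × ℝ) := {p | p.2 ∈ Set.Icc (0:ℝ) 1 ∧ H p = 0} with hSdef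
    have hScl : IsClosed S := by
      have : S = (Prod.snd ⁻¹' Set.Icc (0:ℝ) 1) ∩ (H ⁻¹' {0}) := by
        ext p; simp [hSdef]
      rw [this]
      exact (isClosed_Icc.preimage continuous_snd).inter
        (isClosed_singleton.preimage hH.continuous)
    have hScomp : IsCompact S := by
      apply (hK.prod isCompact_Icc).of_isClosed_subset hScl
      intro p hp
      exact ⟨hbdd p.1 p.2 hp.1 (by rw [Prod.mk.eta]; exact hp.2), hp.1⟩
    choose U ε φ hUopen hUmem hεpos hφz hφc hφcd hφuniq using
      fun p : S => homotopy_local H hH hreg p.1.1 p.1.2 p.2.1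
        (by rw [Prod.mk.eta]; exact p.2.2)
    set c : S → Set ((Fin n → ℝ) × ℝ) := fun p => (U p) ×ˢ ball p.1.2 (ε p) with hcdef
    have hc1 : ∀ p, IsOpen (c p) := fun p => (hUopen p).prod isOpen_ball
    have hc2 : S ⊆ ⋃ p, c p := fun q hq =>
      Set.mem_iUnion.mpr ⟨⟨q, hq⟩, Set.mem_prod.mpr ⟨hUmem _, mem_ball_self (hεpos _)⟩⟩
    obtain ⟨δ, hδ, hleb⟩ := lebesgue_number_lemma_of_metric hScomp hc1 hc2
    refine ⟨δ, hδ, ?_⟩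
    intro z t ht hz0
    obtain ⟨p, hp⟩ := hleb (z, t) ⟨ht, hz0⟩
    have hsubt : ∀ s ∈ ball t δ, s ∈ ball p.1.2 (ε p) := by
      intro s hs
      have : ((z, s)) ∈ c p := by
        apply hp
        rw [mem_ball, Prod.dist_eq]
        simp only [dist_self]
        rw [max_eq_right dist_nonneg]
        exact mem_ball.mp hs
      exact this.2
    have hsubU : ∀ y : Fin n → ℝ, dist y z < δ → y ∈ U p := by
      intro y hy
      have : ((y, t)) ∈ c p := by
        apply hp
        rw [mem_ball, Prod.dist_eq]
        simp only [dist_self]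
        rw [max_eq_left dist_nonneg]
        exact hy
      exact this.1
    exact ⟨φ p, fun s hs => hφz p s (hsubt s hs), fun s hs => hφc p s (hsubt s hs),
      fun s hs => hφcd p s ⟨hsubt s hs.1, hs.2⟩,
      fun s hs y hy hy0 => hφuniq p s (hsubt s hs) y (hsubU y hy) hy0⟩
  set P : ℝ → (ℝ → Fin n → ℝ) → Prop := fun t x =>
    ContinuousOn x (Set.Icc 0 t) ∧ x 0 = x₀ ∧ (∀ s ∈ Set.Icc 0 t, H (x s, s) = 0) ∧
      ∀ s ∈ Set.Ioo (0:ℝ) t, ContDiffAt ℝ 1 x s with hPdef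
  have hstep : ∀ t ∈ Set.Icc (0:ℝ) 1, t < 1 → (∃ x, P t x) →
      ∃ x, P (min 1 (t + δ/2)) x := by
    rintro t ht htlt ⟨x, hxc, hx0, hxz, hxcd⟩
    have hzt : H (x t, t) = 0 := hxz t ⟨ht.1, le_refl t⟩
    obtain ⟨φ, hφz, hφc, hφcd, hφu⟩ := keyU (x t) t ht hzt
    have hcx : ContinuousWithinAt x (Set.Icc 0 t) t := hxc t ⟨ht.1, le_refl t⟩
    obtain ⟨η₀, hη₀, hη⟩ := Metric.continuousWithinAt_iff.mp hcx δ hδ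
    set η := min η₀ (δ/2) with hηdef
    have hηδ : η ≤ δ/2 := min_le_right _ _
    have hηpos : 0 < η := lt_min hη₀ (by linarith)
    set t' := min 1 (t + δ/2) with ht'def
    have htt' : t ≤ t' := le_min ht.2 (by linarith)
    have ht'le : t' ≤ 1 := min_le_left _ _
    have ht'ub : t' ≤ t + δ/2 := min_le_right _ _
    have hball : ∀ s, t - η < s → s ≤ t' → s ∈ ball t δ := by
      intro s h1 h2
      rw [mem_ball, Real.dist_eq, abs_sub_lt_iff]
      constructor <;> linarith
    have heq : ∀ s ∈ Set.Icc 0 t, t - η < s → x s = φ s := by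
      intro s hs hst
      apply hφu s (hball s hst (le_trans hs.2 htt')) (x s) _ (hxz s hs)
      apply hη hs
      rw [Real.dist_eq, abs_sub_lt_iff]
      constructor
      · linarith [hs.2]
      · have : η ≤ η₀ := min_le_left _ _
        linarith
    set y : ℝ → Fin n → ℝ := fun s => if s ≤ t then x s else φ s with hydef
    have hyeqx : ∀ s, s ≤ t → y s = x s := fun s hs => if_pos hs
    have hyeq : ∀ s, t - η < s → s ∈ Set.Icc 0 t' → y s = φ s := by
      intro s h1 h2
      by_cases h : s ≤ t
      · rw [hyeqx s h]; exact heq s ⟨h2.1, h⟩ h1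
      · exact if_neg h
    refine ⟨y, ?_, ?_, ?_, ?_⟩
    · -- continuity
      intro u hu
      by_cases hcase : t - η < u
      · have hc : ContinuousAt φ u := hφc u (hball u hcase hu.2)
        have h1 : ContinuousWithinAt y (Set.Icc 0 t' ∩ Set.Ioi (t - η)) u :=
          (hc.continuousWithinAt).congr
            (fun s hs => hyeq s hs.2 hs.1) (hyeq u hcase hu)
        apply h1.mono_of_mem_nhdsWithin
        exact Filter.inter_mem self_mem_nhdsWithin
          (mem_nhdsWithin_of_mem_nhds (Ioi_mem_nhds hcase))
      · push_neg at hcase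
        have hu_lt : u < t := lt_of_le_of_lt hcase (by linarith)
        have hcx' : ContinuousWithinAt x (Set.Icc 0 t) u := hxc u ⟨hu.1, le_of_lt hu_lt⟩
        have h1 : ContinuousWithinAt y (Set.Icc 0 t) u :=
          hcx'.congr (fun s hs => hyeqx s hs.2) (hyeqx u (le_of_lt hu_lt))
        apply h1.mono_of_mem_nhdsWithin
        apply Filter.mem_of_superset
          (Filter.inter_mem self_mem_nhdsWithin
            (mem_nhdsWithin_of_mem_nhds (Iio_mem_nhds hu_lt)))
        rintro s ⟨hs1, hs2⟩
        exact ⟨hs1.1, le_of_lt hs2⟩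
    · rw [hyeqx 0 ht.1]; exact hx0
    · intro s hs
      by_cases h : s ≤ t
      · rw [hyeqx s h]; exact hxz s ⟨hs.1, h⟩
      · push_neg at h
        rw [hyeq s (by linarith) hs]
        exact hφz s (hball s (by linarith) hs.2)
    · intro s hs
      by_cases hcase : t - η < s
      · have hcd : ContDiffAt ℝ 1 φ s :=
          hφcd s ⟨hball s hcase (le_of_lt hs.2), le_of_lt hs.1, le_trans (le_of_lt hs.2) ht'le⟩
        apply hcd.congr_of_eventuallyEq
        have hopen : Set.Ioo (max (t - η) 0) t' ∈ 𝓝 s :=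
          Ioo_mem_nhds (max_lt hcase hs.1) hs.2
        filter_upwards [hopen] with σ hσ
        exact hyeq σ (lt_of_le_of_lt (le_max_left _ _) hσ.1)
          ⟨le_of_lt (lt_of_le_of_lt (le_max_right _ _) hσ.1), le_of_lt hσ.2⟩
      · push_neg at hcase
        have hslt : s < t := lt_of_le_of_lt hcase (by linarith)
        have hcd := hxcd s ⟨hs.1, hslt⟩
        apply hcd.congr_of_eventuallyEq
        filter_upwards [Iio_mem_nhds hslt] with σ hσ
        exact hyeqx σ (le_of_lt hσ)
  have hind : ∀ k : ℕ, ∃ x, P (min 1 ((k:ℝ) * (δ/2))) x := by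
    intro k
    induction k with
    | zero =>
      have hm : min 1 ((0:ℕ) * (δ/2) : ℝ) = 0 := by norm_num
      rw [hm]
      refine ⟨fun _ => x₀, continuousOn_const, rfl, ?_, ?_⟩
      · intro s hs
        have : s = 0 := le_antisymm hs.2 hs.1
        rw [this]; exact h0
      · intro s hs
        exact absurd hs (by simp)
    | succ k ih =>
      obtain ⟨x, hx⟩ := ih
      by_cases hlt : min 1 ((k:ℝ) * (δ/2)) < 1
      · have ha : (k:ℝ) * (δ/2) < 1 := by
          by_contra hcon
          push_neg at hcon
          rw [min_eq_left hcon] at hlt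
          exact lt_irrefl _ hlt
        have hmin : min 1 ((k:ℝ) * (δ/2)) = (k:ℝ) * (δ/2) := min_eq_right (le_of_lt ha)
        have hmem : min 1 ((k:ℝ) * (δ/2)) ∈ Set.Icc (0:ℝ) 1 :=
          ⟨le_min zero_le_one (by positivity), min_le_left _ _⟩
        obtain ⟨y, hy⟩ := hstep _ hmem hlt ⟨x, hx⟩
        have harith : min 1 (min 1 ((k:ℝ) * (δ/2)) + δ/2) = min 1 (((k+1:ℕ):ℝ) * (δ/2)) := by
          rw [hmin]; push_cast; ring_nf
        rw [harith] at hy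
        exact ⟨y, hy⟩
      · push_neg at hlt
        have h1 : min 1 ((k:ℝ) * (δ/2)) = 1 := le_antisymm (min_le_left _ _) hlt
        have hk1 : (1:ℝ) ≤ (k:ℝ) * (δ/2) := le_trans hlt (min_le_right _ _)
        have h2 : min 1 (((k+1:ℕ):ℝ) * (δ/2)) = 1 := by
          apply min_eq_left
          push_cast
          nlinarith
        rw [h2, ← h1]
        exact ⟨x, hx⟩
  obtain ⟨k, hk⟩ := exists_nat_ge (2/δ)
  have hk1 : (1:ℝ) ≤ (k:ℝ) * (δ/2) := by
    have h21 : (2/δ) * (δ/2) = 1 := by field_simp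
    calc (1:ℝ) = (2/δ) * (δ/2) := h21.symm
      _ ≤ (k:ℝ) * (δ/2) := mul_le_mul_of_nonneg_right hk (by positivity)
  obtain ⟨x, hx⟩ := hind k
  rw [min_eq_left hk1] at hx
  exact ⟨x, hx.1, fun s hs => (hx.2.2.2 s hs).contDiffWithinAt, hx.2.1, hx.2.2.1⟩
end
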